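/- arXiv:1006.1775 — 2 statements merged into one kernel-verified Lean document; each statement's English description precedes it below -/
import Mathlib

section
/- Let u⁰, u¹ : ℂ → ℝ^{2n} satisfy |u^h(z)| ≤ C|z| + C'|z|² near 0, with du^h bounded by C in C⁰, and let second-order Taylor remainders be controlled. Define for 0 < γ < α < 1 and small r > 0 the map w_r(z) = β_{r^α, r^γ}(z) · u¹(r²/z) on the annulus A = {r^α < |z| < r^γ}, where β is the logarithmic cutoff. Then ‖d w_r‖_{C⁰(A)} ≤ C r^{2−2α} ( |ln r^{α−γ}|^{−1} + 1 ). In particular ‖dw_r‖_{C⁰(A)} → 0 as r → 0. -/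
/-- The logarithmic cutoff function `β_{δ,ε}`. -/
noncomputable def logCutoff (δ ε : ℝ) (z : ℂ) : ℝ :=
  if ‖z‖ ≤ δ then 1
  else if ‖z‖ < ε then
    (Real.log ε - Real.log (‖z‖)) / (Real.log ε - Real.log δ)
  else 0

set_option maxHeartbeats 1000000 in
/-- `C⁰` estimate for the differential of `w_r(z) = β_{r^α,r^γ}(z) · u¹(r²/z)` on the
annulus `r^α < |z| < r^γ`: it is bounded by `C r^{2−2α} (|log r^{α−γ}|⁻¹ + 1)` for small `r`. -/
theorem stmt8 (n : ℕ) (u1 : ℂ → EuclideanSpace ℝ (Fin n)) (C C' : ℝ) (hC : 0 < C)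
    (hC' : 0 ≤ C') (hdiff : Differentiable ℝ u1)
    (hu1 : ∀ w : ℂ, ‖u1 w‖ ≤ C * ‖w‖ + C' * ‖w‖ ^ 2)
    (hdu1 : ∀ w : ℂ, ‖fderiv ℝ u1 w‖ ≤ C)
    (α γ : ℝ) (hγ : 0 < γ) (hγα : γ < α) (hα : α < 1) :
    ∃ r₀ ∈ Set.Ioo (0 : ℝ) 1, ∀ r : ℝ, 0 < r → r < r₀ →
      ∀ z : ℂ, r ^ α < ‖z‖ → ‖z‖ < r ^ γ →
        ‖fderiv ℝ (fun w : ℂ => logCutoff (r ^ α) (r ^ γ) w • u1 ((r : ℂ) ^ 2 / w)) z‖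
          ≤ C * r ^ (2 - 2 * α) * (|Real.log (r ^ (α - γ))|⁻¹ + 1) := by
  refine ⟨1/2, by norm_num, ?_⟩
  intro r hr hrhalf z hz1 hz2
  have hr1 : r < 1 := hrhalf.trans (by norm_num)
  set δ := r ^ α with hδdef
  set ε := r ^ γ with hεdef
  have hδpos : 0 < δ := Real.rpow_pos_of_pos hr α
  have hεpos : 0 < ε := Real.rpow_pos_of_pos hr γ
  set a := ‖z‖ with hadef
  have ha : 0 < a := hδpos.trans hz1
  have hz0 : z ≠ 0 := by
    intro h; rw [h] at hadef; simp [hadef] at ha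
  have hδε : δ < ε := Real.rpow_lt_rpow_of_exponent_gt hr hr1 hγα
  set D := Real.log ε - Real.log δ with hDdef
  have hD : 0 < D := sub_pos.2 (Real.log_lt_log hδpos hδε)
  have hlogr : Real.log r < 0 := Real.log_neg hr hr1
  have habs : |Real.log (r ^ (α - γ))| = D := by
    rw [Real.log_rpow hr, hDdef, hδdef, hεdef, Real.log_rpow hr, Real.log_rpow hr,
      abs_of_neg (mul_neg_of_pos_of_neg (sub_pos.2 hγα) hlogr)]
    ring
  -- a linear bound for u1
  have hu0 : u1 0 = 0 := norm_le_zero_iff.mp (by simpa using hu1 0)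
  have hU : ∀ w : ℂ, ‖u1 w‖ ≤ C * ‖w‖ := by
    intro w
    have h := Convex.norm_image_sub_le_of_norm_fderiv_le (s := Set.univ) (f := u1)
      (fun x _ => hdiff x) (fun x _ => hdu1 x) convex_univ (Set.mem_univ 0) (Set.mem_univ w)
    simpa [hu0] using h
  -- the cutoff on the annulus
  set c : ℂ → ℝ := fun w => (Real.log ε - Real.log ‖w‖) / D with hcdef
  -- derivative of the norm
  have hnd : DifferentiableAt ℝ (fun w : ℂ => ‖w‖) z := by
    simpa using (differentiableAt_id (x := z)).norm ℝ (by simpa using hz0)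
  set N := fderiv ℝ (fun w : ℂ => ‖w‖) z with hNdef
  have hN : HasFDerivAt (fun w : ℂ => ‖w‖) N z := hnd.hasFDerivAt
  have hNle : ‖N‖ ≤ 1 := by
    simpa using norm_fderiv_le_of_lipschitz ℝ (lipschitzWith_one_norm (E := ℂ)) (x₀ := z)
  have hznorm : ‖z‖ = a := hadef.symm
  have hψ : HasFDerivAt (fun w : ℂ => Real.log ‖w‖) ((‖z‖)⁻¹ • N) z :=
    (Real.hasDerivAt_log (by simpa [hznorm] using ha.ne')).comp_hasFDerivAt z hN
  set c' : ℂ →L[ℝ] ℝ := D⁻¹ • ((0 : ℂ →L[ℝ] ℝ) - (‖z‖)⁻¹ • N) with hc'def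
  have hcD : HasFDerivAt c c' z := by
    have h1 : HasFDerivAt (fun w : ℂ => (Real.log ε - Real.log ‖w‖) * D⁻¹)
        (D⁻¹ • ((0 : ℂ →L[ℝ] ℝ) - (‖z‖)⁻¹ • N)) z :=
      (((hasFDerivAt_const (Real.log ε) z).sub hψ).mul_const D⁻¹)
    simpa [hcdef, div_eq_mul_inv, hc'def] using h1
  have hc'n : ‖c'‖ ≤ D⁻¹ * a⁻¹ := by
    apply ContinuousLinearMap.opNorm_le_bound _ (by positivity)
    intro v
    have hNv : |N v| ≤ ‖v‖ := by
      have h1 := N.le_opNorm v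
      have h2 : ‖N‖ * ‖v‖ ≤ 1 * ‖v‖ := mul_le_mul_of_nonneg_right hNle (norm_nonneg v)
      rw [Real.norm_eq_abs] at h1
      linarith
    have hev : c' v = D⁻¹ * (0 - ‖z‖⁻¹ * N v) := by simp [hc'def]
    rw [hev, Real.norm_eq_abs, zero_sub, abs_mul, abs_neg, abs_mul,
      abs_of_pos (inv_pos.2 hD), hznorm, abs_of_pos (inv_pos.2 ha)]
    calc D⁻¹ * (a⁻¹ * |N v|) = D⁻¹ * a⁻¹ * |N v| := by ring
      _ ≤ D⁻¹ * a⁻¹ * ‖v‖ := mul_le_mul_of_nonneg_left hNv (by positivity)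
  -- derivative of w ↦ r²/w
  set g' : ℂ := -((r : ℂ) ^ 2 * (z ^ 2)⁻¹) with hg'def
  have hg : HasDerivAt (fun w : ℂ => (r : ℂ) ^ 2 / w) g' z := by
    simpa [div_eq_mul_inv] using (hasDerivAt_inv hz0).const_mul ((r : ℂ) ^ 2)
  set G : ℂ →L[ℝ] ℂ :=
    (ContinuousLinearMap.smulRight (1 : ℂ →L[ℂ] ℂ) g').restrictScalars ℝ with hGdef
  have hGF : HasFDerivAt (fun w : ℂ => (r : ℂ) ^ 2 / w) G z :=
    (hasDerivAt_iff_hasFDerivAt.mp hg).restrictScalars ℝ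
  have hGn : ‖G‖ = r ^ 2 / a ^ 2 := by
    rw [hGdef, ContinuousLinearMap.norm_restrictScalars,
      ContinuousLinearMap.norm_smulRight_apply, norm_one, one_mul, hg'def, norm_neg]
    simp [map_mul, map_pow, map_inv₀, Complex.norm_real,
      abs_of_pos hr, div_eq_mul_inv, hadef]
  set w₀ : ℂ := (r : ℂ) ^ 2 / z with hw₀def
  have hw₀abs : ‖w₀‖ = r ^ 2 / a := by
    rw [hw₀def, norm_div, norm_pow, Complex.norm_real, Real.norm_eq_abs, abs_of_pos hr, hadef]
  have hcomp : HasFDerivAt (fun w : ℂ => u1 ((r : ℂ) ^ 2 / w))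
      ((fderiv ℝ u1 w₀).comp G) z := by
    simpa [Function.comp_def, hw₀def] using
      ((hdiff w₀).hasFDerivAt.comp z (by simpa [hw₀def] using hGF))
  -- the whole derivative
  have H : HasFDerivAt (fun w : ℂ => c w • u1 ((r : ℂ) ^ 2 / w))
      (c z • (fderiv ℝ u1 w₀).comp G + c'.smulRight (u1 w₀)) z := hcD.smul hcomp
  -- the given function agrees with `c • u1 ∘ g` near z
  have hUopen : IsOpen ((fun w : ℂ => ‖w‖) ⁻¹' Set.Ioo δ ε) := isOpen_Ioo.preimage continuous_norm
  have hev : (fun w : ℂ => logCutoff δ ε w • u1 ((r : ℂ) ^ 2 / w)) =ᶠ[nhds z]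
      (fun w : ℂ => c w • u1 ((r : ℂ) ^ 2 / w)) := by
    filter_upwards [hUopen.mem_nhds (Set.mem_preimage.2 ⟨hz1, hz2⟩)] with w hw
    rcases hw with ⟨h1, h2⟩
    rw [logCutoff, if_neg (not_le.2 h1), if_pos h2, hcdef]
  rw [hev.fderiv_eq, H.fderiv]
  -- numerical estimates
  have hr2 : (0:ℝ) < r ^ 2 := by positivity
  have key : r ^ 2 / a ^ 2 ≤ r ^ (2 - 2 * α) := by
    have h1 : δ ^ 2 ≤ a ^ 2 := pow_le_pow_left₀ hδpos.le hz1.le 2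
    have h2 : r ^ 2 / a ^ 2 ≤ r ^ 2 / δ ^ 2 :=
      div_le_div_of_nonneg_left hr2.le (by positivity) h1
    have h3 : δ ^ 2 = r ^ (α * 2) := by
      rw [hδdef, ← Real.rpow_natCast (r ^ α) 2, ← Real.rpow_mul hr.le]
      norm_num
    have h4 : (r:ℝ) ^ 2 = r ^ ((2:ℕ):ℝ) := (Real.rpow_natCast r 2).symm
    rw [h3, h4] at h2
    rw [← Real.rpow_sub hr] at h2
    convert h2 using 2
    push_cast
    ring
  have hcz0 : 0 ≤ c z := by
    rw [hcdef]
    apply div_nonneg _ hD.le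
    rw [hznorm, sub_nonneg]
    exact Real.log_le_log ha hz2.le
  have hcz1 : c z ≤ 1 := by
    rw [hcdef, div_le_one hD, hDdef]
    have := Real.log_le_log hδpos hz1.le
    rw [hznorm]; linarith
  have hcompn : ‖(fderiv ℝ u1 w₀).comp G‖ ≤ C * (r ^ 2 / a ^ 2) := by
    calc ‖(fderiv ℝ u1 w₀).comp G‖ ≤ ‖fderiv ℝ u1 w₀‖ * ‖G‖ :=
          ContinuousLinearMap.opNorm_comp_le _ _
      _ ≤ C * (r ^ 2 / a ^ 2) := by
          rw [hGn]
          exact mul_le_mul_of_nonneg_right (hdu1 _) (by positivity)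
  have hvn : ‖u1 w₀‖ ≤ C * (r ^ 2 / a) := by
    simpa [hw₀abs] using hU w₀
  calc ‖c z • (fderiv ℝ u1 w₀).comp G + c'.smulRight (u1 w₀)‖
      ≤ ‖c z • (fderiv ℝ u1 w₀).comp G‖ + ‖c'.smulRight (u1 w₀)‖ := norm_add_le _ _
    _ ≤ |c z| * ‖(fderiv ℝ u1 w₀).comp G‖ + ‖c'‖ * ‖u1 w₀‖ := by
        apply add_le_add
        · simpa [Real.norm_eq_abs] using norm_smul_le (c z) ((fderiv ℝ u1 w₀).comp G)
        · exact le_of_eq (ContinuousLinearMap.norm_smulRight_apply _ _)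
    _ ≤ 1 * (C * (r ^ 2 / a ^ 2)) + (D⁻¹ * a⁻¹) * (C * (r ^ 2 / a)) := by
        apply add_le_add
        · exact mul_le_mul (abs_le.mpr ⟨by linarith, hcz1⟩) hcompn
            (norm_nonneg _) (by norm_num)
        · exact mul_le_mul hc'n hvn (norm_nonneg _) (by positivity)
    _ = C * (r ^ 2 / a ^ 2) + C * (r ^ 2 / a ^ 2) * D⁻¹ := by
        field_simp
    _ ≤ C * r ^ (2 - 2 * α) + C * r ^ (2 - 2 * α) * D⁻¹ := by
        have h1 : C * (r ^ 2 / a ^ 2) ≤ C * r ^ (2 - 2 * α) :=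
          mul_le_mul_of_nonneg_left key hC.le
        have h2 : C * (r ^ 2 / a ^ 2) * D⁻¹ ≤ C * r ^ (2 - 2 * α) * D⁻¹ :=
          mul_le_mul_of_nonneg_right h1 (by positivity)
        linarith
    _ = C * r ^ (2 - 2 * α) * (|Real.log (r ^ (α - γ))|⁻¹ + 1) := by
        rw [habs]; ring
end

section
/- Let X, Y be Banach spaces, f : U → Y a C¹ map on an open neighborhood U of x₀ ∈ X, D = df(x₀), and Q : Y → X a bounded right inverse of D (D Q = Id, ‖Q‖ ≤ c). Suppose there is δ > 0 with B(x₀, δ) ⊂ U and ‖df(x) − D‖ ≤ 1/(2c) for all x with ‖x − x₀‖ ≤ δ. If ‖f(x₀)‖ ≤ δ/(4c), then there exists x with f(x) = 0, ‖x − x₀‖ ≤ 2c‖f(x₀)‖ ≤ δ/2, and x − x₀ ∈ im Q; moreover such x is unique among points of the form x₀ + Qξ with ‖x − x₀‖ ≤ δ. -/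
/-- Quantitative implicit function theorem (Newton–Picard form): if `D = df(x₀)` has a bounded
right inverse `Q` with `‖Q‖ ≤ c`, `‖df(x) − D‖ ≤ 1/(2c)` on the `δ`-ball, and
`‖f(x₀)‖ ≤ δ/(4c)`, then there is a zero `x` of `f` with `‖x − x₀‖ ≤ 2c‖f(x₀)‖ ≤ δ/2` and
`x − x₀ ∈ im Q`, unique among such points within distance `δ`. -/
theorem stmt9 {X Y : Type*}
    [NormedAddCommGroup X] [NormedSpace ℝ X] [CompleteSpace X]
    [NormedAddCommGroup Y] [NormedSpace ℝ Y] [CompleteSpace Y]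
    (U : Set X) (hU : IsOpen U) (x₀ : X) (hx₀ : x₀ ∈ U)
    (f : X → Y) (hf : ContDiffOn ℝ 1 f U)
    (D : X →L[ℝ] Y) (hD : D = fderiv ℝ f x₀)
    (Q : Y →L[ℝ] X) (c : ℝ) (hc : 0 < c)
    (hDQ : D.comp Q = ContinuousLinearMap.id ℝ Y) (hQ : ‖Q‖ ≤ c)
    (δ : ℝ) (hδ : 0 < δ) (hball : Metric.closedBall x₀ δ ⊆ U)
    (hder : ∀ x : X, ‖x - x₀‖ ≤ δ → ‖fderiv ℝ f x - D‖ ≤ 1 / (2 * c))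
    (hf0 : ‖f x₀‖ ≤ δ / (4 * c)) :
    ∃ x : X, f x = 0 ∧ ‖x - x₀‖ ≤ 2 * c * ‖f x₀‖ ∧ 2 * c * ‖f x₀‖ ≤ δ / 2 ∧
      (x - x₀) ∈ Set.range Q ∧
      ∀ x' : X, (x' - x₀) ∈ Set.range Q → f x' = 0 → ‖x' - x₀‖ ≤ δ → x' = x := by
  have hfnn : (0:ℝ) ≤ ‖f x₀‖ := norm_nonneg _
  set r : ℝ := 2 * ‖f x₀‖ with hrdef
  have hr0 : 0 ≤ r := by positivity
  have hrhalf : 2 * c * ‖f x₀‖ ≤ δ / 2 := by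
    have h1 : 2 * c * ‖f x₀‖ ≤ 2 * c * (δ / (4 * c)) := by
      apply mul_le_mul_of_nonneg_left hf0 (by positivity)
    have h2 : 2 * c * (δ / (4 * c)) = δ / 2 := by field_simp; ring
    linarith
  have hcr : c * r ≤ δ / 2 := by rw [hrdef]; linarith [hrhalf]
  -- differentiability
  have hdiff : ∀ z ∈ U, HasFDerivAt f (fderiv ℝ f z) z := fun z hz =>
    (((hf.differentiableOn one_ne_zero) z hz).differentiableAt (hU.mem_nhds hz)).hasFDerivAt
  -- the set
  set s : Set Y := Metric.closedBall (0:Y) r with hsdef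
  have hQmem : ∀ η ∈ s, x₀ + Q η ∈ Metric.closedBall x₀ δ := by
    intro η hη
    have hη' : ‖η‖ ≤ r := by simpa [hsdef, Metric.mem_closedBall, dist_eq_norm] using hη
    have : ‖Q η‖ ≤ c * r := le_trans (Q.le_opNorm η)
      (mul_le_mul hQ hη' (norm_nonneg _) (le_of_lt hc))
    simp only [Metric.mem_closedBall, dist_eq_norm, add_sub_cancel_left]
    linarith
  -- h and its derivative
  set h : Y → Y := fun η => f (x₀ + Q η) - η with hhdef
  have hhderiv : ∀ η ∈ s, HasFDerivWithinAt h
      ((fderiv ℝ f (x₀ + Q η)).comp Q - ContinuousLinearMap.id ℝ Y) s η := by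
    intro η hη
    have hz : x₀ + Q η ∈ U := hball (hQmem η hη)
    have h1 : HasFDerivAt (fun η : Y => f (x₀ + Q η)) ((fderiv ℝ f (x₀ + Q η)).comp Q) η :=
      (hdiff _ hz).comp η (Q.hasFDerivAt.const_add x₀)
    exact ((h1.sub (hasFDerivAt_id η)).hasFDerivWithinAt)
  have hhbound : ∀ η ∈ s,
      ‖(fderiv ℝ f (x₀ + Q η)).comp Q - ContinuousLinearMap.id ℝ Y‖ ≤ 1/2 := by
    intro η hη
    have hz : ‖(x₀ + Q η) - x₀‖ ≤ δ := by
      have := hQmem η hη; simpa [Metric.mem_closedBall, dist_eq_norm] using this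
    have key : (fderiv ℝ f (x₀ + Q η)).comp Q - ContinuousLinearMap.id ℝ Y
        = (fderiv ℝ f (x₀ + Q η) - D).comp Q := by
      rw [ContinuousLinearMap.sub_comp, hDQ]
    rw [key]
    calc ‖(fderiv ℝ f (x₀ + Q η) - D).comp Q‖ ≤ ‖fderiv ℝ f (x₀ + Q η) - D‖ * ‖Q‖ :=
          ContinuousLinearMap.opNorm_comp_le _ _
      _ ≤ (1 / (2 * c)) * c := by
          apply mul_le_mul (hder _ hz) hQ (norm_nonneg _)
          positivity
      _ = 1/2 := by field_simp
  have hconv : Convex ℝ s := convex_closedBall _ _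
  have hlip : ∀ a ∈ s, ∀ b ∈ s, ‖h b - h a‖ ≤ (1/2) * ‖b - a‖ := by
    intro a ha b hb
    exact hconv.norm_image_sub_le_of_norm_hasFDerivWithin_le hhderiv hhbound ha hb
  set Φ : Y → Y := fun η => η - f (x₀ + Q η) with hΦdef
  have hΦh : ∀ η, Φ η = -h η := by intro η; simp [hΦdef, hhdef]
  have h0s : (0:Y) ∈ s := by simp [hsdef, Metric.mem_closedBall, hr0]
  have hΦ0 : Φ 0 = -f x₀ := by simp [hΦdef]
  have hmap : ∀ η ∈ s, Φ η ∈ s := by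
    intro η hη
    have hη' : ‖η‖ ≤ r := by simpa [hsdef, Metric.mem_closedBall, dist_eq_norm] using hη
    have h1 : ‖Φ η - Φ 0‖ ≤ (1/2) * ‖η‖ := by
      rw [hΦh η, hΦh 0]
      have := hlip η hη 0 h0s
      have he : -h η - -h 0 = h 0 - h η := by abel
      calc ‖-h η - -h 0‖ = ‖h 0 - h η‖ := by rw [he]
        _ ≤ (1/2) * ‖(0:Y) - η‖ := this
        _ = (1/2) * ‖η‖ := by rw [zero_sub, norm_neg]
    have hb1 : ‖Φ η‖ ≤ ‖Φ η - Φ 0‖ + ‖Φ 0‖ := by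
      simpa using norm_add_le (Φ η - Φ 0) (Φ 0)
    simp only [hsdef, Metric.mem_closedBall, dist_eq_norm, sub_zero]
    have hΦ0n : ‖Φ 0‖ = ‖f x₀‖ := by rw [hΦ0, norm_neg]
    have : ‖Φ η‖ ≤ (1/2) * ‖η‖ + ‖f x₀‖ := by linarith
    rw [hrdef]; linarith
  -- fixed point on the subtype
  haveI : CompleteSpace s := IsClosed.completeSpace_coe (hs := Metric.isClosed_closedBall)
  haveI : Nonempty s := ⟨⟨0, h0s⟩⟩
  set T : s → s := fun a => ⟨Φ a.1, hmap a.1 a.2⟩ with hTdef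
  have hT : ContractingWith (1/2 : NNReal) T := by
    constructor
    · rw [← NNReal.coe_lt_coe]; norm_num
    · apply LipschitzWith.of_dist_le_mul
      intro a b
      rw [Subtype.dist_eq, Subtype.dist_eq, dist_eq_norm, dist_eq_norm]
      have h1 : Φ a.1 - Φ b.1 = h b.1 - h a.1 := by rw [hΦh, hΦh]; abel
      show ‖Φ a.1 - Φ b.1‖ ≤ (1/2 : NNReal) * ‖a.1 - b.1‖
      rw [h1]
      have := hlip b.1 b.2 a.1 a.2
      have hcoe : ((1/2 : NNReal) : ℝ) = 1/2 := by norm_num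
      calc ‖h b.1 - h a.1‖ = ‖h a.1 - h b.1‖ := norm_sub_rev _ _
        _ ≤ (1/2) * ‖a.1 - b.1‖ := this
        _ = (1/2 : NNReal) * ‖a.1 - b.1‖ := by rw [hcoe]
  set p : s := hT.fixedPoint T with hpdef
  have hfix : T p = p := hT.fixedPoint_isFixedPt
  have hfixv : Φ p.1 = p.1 := congrArg Subtype.val hfix
  have hzero : f (x₀ + Q p.1) = 0 := by
    have : p.1 - f (x₀ + Q p.1) = p.1 := hfixv
    rwa [sub_eq_self] at this
  refine ⟨x₀ + Q p.1, hzero, ?_, hrhalf, ?_, ?_⟩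
  · rw [add_sub_cancel_left]
    have hp : ‖p.1‖ ≤ r := by
      have h2 := Metric.mem_closedBall.mp p.2; rwa [dist_zero_right] at h2
    calc ‖Q p.1‖ ≤ ‖Q‖ * ‖p.1‖ := Q.le_opNorm _
      _ ≤ c * r := mul_le_mul hQ hp (norm_nonneg _) (le_of_lt hc)
      _ = 2 * c * ‖f x₀‖ := by rw [hrdef]; ring
  · rw [add_sub_cancel_left]; exact ⟨p.1, rfl⟩
  · rintro x' ⟨ξ, hξ⟩ hfx' hx'δ
    set x := x₀ + Q p.1 with hxdef
    have hxδ : ‖x - x₀‖ ≤ δ := by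
      have := hQmem p.1 p.2
      simpa [Metric.mem_closedBall, dist_eq_norm, hxdef] using this
    -- mean value on X for z ↦ f z - D z
    have hgderiv : ∀ z ∈ Metric.closedBall x₀ δ,
        HasFDerivWithinAt (fun z => f z - D z) (fderiv ℝ f z - D) (Metric.closedBall x₀ δ) z := by
      intro z hz
      exact ((hdiff z (hball hz)).sub D.hasFDerivAt).hasFDerivWithinAt
    have hgbound : ∀ z ∈ Metric.closedBall x₀ δ, ‖fderiv ℝ f z - D‖ ≤ 1/(2*c) := by
      intro z hz
      exact hder z (by simpa [Metric.mem_closedBall, dist_eq_norm] using hz)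
    have hx'mem : x' ∈ Metric.closedBall x₀ δ := by
      simpa [Metric.mem_closedBall, dist_eq_norm] using hx'δ
    have hxmem : x ∈ Metric.closedBall x₀ δ := by
      simpa [Metric.mem_closedBall, dist_eq_norm] using hxδ
    have hmv := (convex_closedBall x₀ δ).norm_image_sub_le_of_norm_hasFDerivWithin_le
      hgderiv hgbound hxmem hx'mem
    have hval : (f x' - D x') - (f x - D x) = -(D (x' - x)) := by
      rw [hfx', hzero]; simp [map_sub]; abel
    rw [hval, norm_neg] at hmv
    have hDx : D (x' - x) = ξ - p.1 := by
      have h1 : x' - x = Q (ξ - p.1) := by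
        rw [map_sub, hξ, hxdef]; abel
      rw [h1, ← ContinuousLinearMap.comp_apply, hDQ]; rfl
    rw [hDx] at hmv
    have h2 : ‖x' - x‖ ≤ c * ‖ξ - p.1‖ := by
      have h1 : x' - x = Q (ξ - p.1) := by
        rw [map_sub, hξ, hxdef]; abel
      rw [h1]
      calc ‖Q (ξ - p.1)‖ ≤ ‖Q‖ * ‖ξ - p.1‖ := Q.le_opNorm _
        _ ≤ c * ‖ξ - p.1‖ := mul_le_mul_of_nonneg_right hQ (norm_nonneg _)
    have h3 : ‖x' - x‖ ≤ (1/2) * ‖x' - x‖ := by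
      calc ‖x' - x‖ ≤ c * ‖ξ - p.1‖ := h2
        _ ≤ c * ((1/(2*c)) * ‖x' - x‖) := by
            apply mul_le_mul_of_nonneg_left hmv (le_of_lt hc)
        _ = (1/2) * ‖x' - x‖ := by field_simp
    have h4 : ‖x' - x‖ ≤ 0 := by linarith
    have : x' - x = 0 := by
      have := norm_nonneg (x' - x); have := le_antisymm h4 this; exact norm_eq_zero.mp this
    have := sub_eq_zero.mp this
    simpa [hxdef] using this
end
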